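/- Let f : [n]^{k+1} → [n]^{k+1} be monotone and let m ∈ [n]. Then there exists a point x ∈ [n]^{k+1} with x_{k+1} = m such that x is either prefixed (f(x) ≼ x) or postfixed (x ≼ f(x)). -/

import Mathlib

/-- `x` lies in the grid `[n]^k = {1,...,n}^k` (coordinates as integers). -/
def inGrid (n : ℕ) {k : ℕ} (x : Fin k → ℤ) : Prop :=
  ∀ i, 1 ≤ x i ∧ x i ≤ (n : ℤ)
theorem exists_pre_or_postfixed_on_slice (n k : ℕ)
    (f : (Fin (k + 1) → ℤ) → Fin (k + 1) → ℤ)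
    (hmaps : ∀ x, inGrid n x → inGrid n (f x))
    (hmono : ∀ x y, inGrid n x → inGrid n y → x ≤ y → f x ≤ f y)
    (m : ℤ) (hm : 1 ≤ m ∧ m ≤ (n : ℤ)) :
    ∃ x : Fin k → ℤ, inGrid n x ∧
      (f (Fin.snoc x m) ≤ Fin.snoc x m ∨ (Fin.snoc x m : Fin (k + 1) → ℤ) ≤ f (Fin.snoc x m)) := by
  -- helper: snoc of a grid point with m is in the grid
  have hsnoc_grid : ∀ x : Fin k → ℤ, inGrid n x → inGrid n (Fin.snoc x m) := by
    intro x hx i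
    refine Fin.lastCases ?_ ?_ i
    · simpa using hm
    · intro j; simpa using hx j
  have hsnoc_mono : ∀ x y : Fin k → ℤ, x ≤ y →
      (Fin.snoc x m : Fin (k+1) → ℤ) ≤ Fin.snoc y m := by
    intro x y hxy i
    refine Fin.lastCases ?_ ?_ i
    · simp
    · intro j; simpa using hxy j
  -- the map g on the slice
  set g : (Fin k → ℤ) → Fin k → ℤ := fun x i => f (Fin.snoc x m) i.castSucc with hg
  have hg_grid : ∀ x, inGrid n x → inGrid n (g x) := by
    intro x hx i
    exact hmaps _ (hsnoc_grid x hx) i.castSucc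
  have hg_mono : ∀ x y, inGrid n x → inGrid n y → x ≤ y → g x ≤ g y := by
    intro x y hx hy hxy i
    exact hmono _ _ (hsnoc_grid x hx) (hsnoc_grid y hy) (hsnoc_mono x y hxy) i.castSucc
  -- set of postfixed points
  set S : Set (Fin k → ℤ) := {x | inGrid n x ∧ x ≤ g x} with hS
  have hSfin : S.Finite := by
    have : S ⊆ Set.pi Set.univ (fun _ : Fin k => Set.Icc (1 : ℤ) (n : ℤ)) := by
      intro x hx i _
      exact ⟨(hx.1 i).1, (hx.1 i).2⟩
    exact Set.Finite.subset (Set.Finite.pi (fun _ => Set.finite_Icc _ _)) this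
  have hn1 : (1 : ℤ) ≤ (n : ℤ) := hm.1.trans hm.2
  have hbotg : inGrid n (fun _ : Fin k => (1 : ℤ)) := fun i => ⟨le_refl _, hn1⟩
  have hbot : (fun _ : Fin k => (1 : ℤ)) ∈ S := by
    refine ⟨hbotg, fun i => ?_⟩
    exact (hg_grid _ hbotg i).1
  -- take element of S maximizing the coordinate sum
  obtain ⟨x, hxS, hxmax⟩ := Set.Finite.exists_maximalFor (fun x => ∑ i, x i) S hSfin ⟨_, hbot⟩
  have hxg : inGrid n (g x) := hg_grid x hxS.1
  have hgxS : g x ∈ S := ⟨hxg, hg_mono x (g x) hxS.1 hxg hxS.2⟩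
  have hsum : ∑ i, x i = ∑ i, g x i :=
    le_antisymm (Finset.sum_le_sum (fun i _ => hxS.2 i)) (hxmax hgxS (Finset.sum_le_sum (fun i _ => hxS.2 i)))
  have hfix : g x = x := by
    by_contra h
    have hne : ∃ i ∈ Finset.univ, x i < g x i := by
      by_contra hc
      push_neg at hc
      exact h (funext fun i => le_antisymm (hc i (Finset.mem_univ i)) (hxS.2 i))
    obtain ⟨i, hi, hlt⟩ := hne
    have := Finset.sum_lt_sum (fun j _ => hxS.2 j) ⟨i, hi, hlt⟩
    omega
  refine ⟨x, hxS.1, ?_⟩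
  have hcoord : ∀ i : Fin k, f (Fin.snoc x m) i.castSucc = x i := by
    intro i
    have := congrFun hfix i
    simpa [hg] using this
  rcases le_total (f (Fin.snoc x m) (Fin.last k)) m with h | h
  · left
    intro i
    refine Fin.lastCases ?_ ?_ i
    · simpa using h
    · intro j
      rw [hcoord j]
      simp
  · right
    intro i
    refine Fin.lastCases ?_ ?_ i
    · simpa using h
    · intro j
      rw [Fin.snoc_castSucc, ← hcoord j]
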